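/- Let A = G(d,e,k) be a group of squarefree order n = de, with z = gcd(k−1, e) and g = e/z. Then the automorphism group Aut(A) is isomorphic to ℤ/gℤ ⋊ (ℤ/eℤ)ˣ; in particular |Aut(A)| = g·φ(e), where φ is Euler's totient function. -/

import Mathlib

/-- The relators for the group `G(d,e,k) = ⟨σ, τ | σ^e = τ^d = 1, τστ⁻¹ = σ^k⟩`. -/
def braceRels (d e k : ℕ) : Set (FreeGroup (Fin 2)) :=
  {FreeGroup.of 0 ^ e, FreeGroup.of 1 ^ d,
    FreeGroup.of 1 * FreeGroup.of 0 * (FreeGroup.of 1)⁻¹ * (FreeGroup.of 0 ^ k)⁻¹}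

/-- The group `G(d,e,k)` presented by generators σ (index 0) and τ (index 1). -/
abbrev GGrp (d e k : ℕ) := PresentedGroup (braceRels d e k)

namespace AutGG

def addAutToMulAut (A : Type*) [AddGroup A] : Multiplicative (AddAut A) →* MulAut (Multiplicative A) where
  toFun f := AddEquiv.toMultiplicative (Multiplicative.toAdd f)
  map_one' := by ext x; rfl
  map_mul' f g := by ext x; rfl

def unitsMulAut (m : ℕ) : (ZMod m)ˣ →* MulAut (Multiplicative (ZMod m)) :=
  (addAutToMulAut (ZMod m)).comp (DistribMulAction.toAddAut (ZMod m)ˣ (ZMod m))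

@[simp] lemma unitsMulAut_apply (m : ℕ) (w : (ZMod m)ˣ) (a : ZMod m) :
    unitsMulAut m w (Multiplicative.ofAdd a) = Multiplicative.ofAdd ((w : ZMod m) * a) := by
  simp [unitsMulAut, addAutToMulAut, AddEquiv.toMultiplicative, Units.smul_def]; rfl

def zmodPowHom (m : ℕ) {H : Type*} [Group H] (x : H) (hx : x ^ m = 1) :
    Multiplicative (ZMod m) →* H :=
  AddMonoidHom.toMultiplicativeLeft
    (ZMod.lift m ⟨zmultiplesHom (Additive H) (Additive.ofMul x), by
      show (m : ℤ) • Additive.ofMul x = 0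
      rw [← ofMul_zpow, zpow_natCast, hx]; rfl⟩)

@[simp] lemma zmodPowHom_natCast (m : ℕ) {H : Type*} [Group H] (x : H) (hx : x ^ m = 1) (c : ℕ) :
    zmodPowHom m x hx (Multiplicative.ofAdd (c : ZMod m)) = x ^ c := by
  have h1 : ((c : ℤ) : ZMod m) = (c : ZMod m) := by push_cast; rfl
  simp only [zmodPowHom, AddMonoidHom.coe_toMultiplicativeLeft, Function.comp_apply, toAdd_ofAdd]
  rw [← h1, ZMod.lift_coe]
  show Additive.toMul ((c : ℤ) • Additive.ofMul x) = _
  rw [← ofMul_zpow, toMul_ofMul, zpow_natCast]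

lemma mhom_ext {m : ℕ} [NeZero m] {H : Type*} [Monoid H] {f h : Multiplicative (ZMod m) →* H}
    (hfh : f (Multiplicative.ofAdd 1) = h (Multiplicative.ofAdd 1)) : f = h := by
  refine MonoidHom.ext fun x => ?_
  have hx : x = (Multiplicative.ofAdd (1 : ZMod m)) ^ (Multiplicative.toAdd x).val := by
    rw [← ofAdd_nsmul]
    simp [nsmul_eq_mul, ZMod.natCast_val, ZMod.cast_id]
  rw [hx, map_pow, map_pow, hfh]

lemma ahom_ext {m : ℕ} [NeZero m] {B : Type*} [AddMonoid B] {f h : ZMod m →+ B}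
    (hfh : f 1 = h 1) : f = h := by
  ext x
  have hx : x = (x.val) • (1 : ZMod m) := by
    simp [nsmul_eq_mul, ZMod.natCast_val, ZMod.cast_id]
  rw [hx, map_nsmul, map_nsmul, hfh]


variable (d e k : ℕ)
def σ : GGrp d e k := PresentedGroup.of 0
def τ : GGrp d e k := PresentedGroup.of 1
variable {d e k}
lemma mk_rel_one {r : FreeGroup (Fin 2)} (hr : r ∈ braceRels d e k) :
    PresentedGroup.mk (braceRels d e k) r = 1 :=
  (QuotientGroup.eq_one_iff r).mpr (Subgroup.subset_normalClosure hr)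
lemma sigma_pow_e : (σ d e k) ^ e = 1 := by
  have := mk_rel_one (d := d) (e := e) (k := k) (by left; rfl)
  rw [map_pow] at this; exact this
lemma tau_pow_d : (τ d e k) ^ d = 1 := by
  have := mk_rel_one (d := d) (e := e) (k := k) (by right; left; rfl)
  rw [map_pow] at this; exact this
lemma tau_sigma_tau_inv : τ d e k * σ d e k * (τ d e k)⁻¹ = (σ d e k) ^ k := by
  have := mk_rel_one (d := d) (e := e) (k := k) (by right; right; rfl)
  simp only [map_mul, map_inv, map_pow] at this
  rw [mul_inv_eq_one] at this
  exact this

-- new material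
lemma ofAdd_one_pow (m c : ℕ) :
    (Multiplicative.ofAdd (1 : ZMod m)) ^ c = Multiplicative.ofAdd ((c : ℕ) : ZMod m) := by
  rw [← ofAdd_nsmul]; simp [nsmul_eq_mul]

variable (hke : Nat.Coprime k e) (hu : ZMod.unitOfCoprime k hke ^ d = 1)

noncomputable def ψ : Multiplicative (ZMod d) →* MulAut (Multiplicative (ZMod e)) :=
  (unitsMulAut e).comp (zmodPowHom d (ZMod.unitOfCoprime k hke) hu)

lemma ψ_one_one :
    ψ hke hu (Multiplicative.ofAdd 1) (Multiplicative.ofAdd 1) =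
      Multiplicative.ofAdd ((k : ℕ) : ZMod e) := by
  have h1 : (1 : ZMod d) = ((1:ℕ) : ZMod d) := by norm_num
  rw [ψ, MonoidHom.comp_apply, h1, zmodPowHom_natCast, pow_one, unitsMulAut_apply]
  rw [ZMod.coe_unitOfCoprime, mul_one]

abbrev KK := Multiplicative (ZMod e) ⋊[ψ hke hu] Multiplicative (ZMod d)

noncomputable def θf : GGrp d e k →* KK hke hu :=
  PresentedGroup.toGroup (f := ![SemidirectProduct.inl (Multiplicative.ofAdd (1:ZMod e)),
    SemidirectProduct.inr (Multiplicative.ofAdd (1:ZMod d))]) (by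
  intro r hr
  rcases hr with rfl | rfl | rfl
  · simp only [map_pow, FreeGroup.lift_apply_of, Matrix.cons_val_zero]
    rw [← map_pow, ofAdd_one_pow]
    simp
  · simp only [map_pow, FreeGroup.lift_apply_of, Matrix.cons_val_one, Matrix.head_cons, Matrix.cons_val_zero]
    rw [← map_pow, ofAdd_one_pow]
    simp
  · simp only [map_mul, map_inv, map_pow, FreeGroup.lift_apply_of, Matrix.cons_val_zero,
      Matrix.cons_val_one, Matrix.head_cons]
    rw [← map_inv, ← SemidirectProduct.inl_aut, ψ_one_one, ← map_pow, ofAdd_one_pow,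
      ← map_inv, ← map_mul]
    simp)

@[simp] lemma θf_σ : θf hke hu (σ d e k) = SemidirectProduct.inl (Multiplicative.ofAdd (1:ZMod e)) := by
  exact PresentedGroup.toGroup.of (f := ![SemidirectProduct.inl (Multiplicative.ofAdd (1:ZMod e)),
    SemidirectProduct.inr (Multiplicative.ofAdd (1:ZMod d))]) _ (x := 0)

@[simp] lemma θf_τ : θf hke hu (τ d e k) = SemidirectProduct.inr (Multiplicative.ofAdd (1:ZMod d)) := by
  exact PresentedGroup.toGroup.of (f := ![SemidirectProduct.inl (Multiplicative.ofAdd (1:ZMod e)),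
    SemidirectProduct.inr (Multiplicative.ofAdd (1:ZMod d))]) _ (x := 1)

variable [NeZero d] [NeZero e]

lemma theta_comm : ∀ gg : Multiplicative (ZMod d),
    (zmodPowHom e (σ d e k) sigma_pow_e).comp (ψ hke hu gg).toMonoidHom =
      (MulAut.conj (zmodPowHom d (τ d e k) tau_pow_d gg)).toMonoidHom.comp
        (zmodPowHom e (σ d e k) sigma_pow_e) := by
  set f₁ := zmodPowHom e (σ d e k) sigma_pow_e
  set f₂ := zmodPowHom d (τ d e k) tau_pow_d
  set P : Multiplicative (ZMod d) → Prop := fun gg =>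
    ∀ x, f₁ (ψ hke hu gg x) = f₂ gg * f₁ x * (f₂ gg)⁻¹ with hP
  have h1 : P 1 := by intro x; simp
  have hmul : ∀ a b, P a → P b → P (a * b) := by
    intro a b ha hb x
    rw [map_mul]
    have : (ψ hke hu a * ψ hke hu b) x = ψ hke hu a (ψ hke hu b x) := rfl
    rw [this, ha, hb, map_mul]
    group
  have hgen : P (Multiplicative.ofAdd 1) := by
    have : f₁.comp (ψ hke hu (Multiplicative.ofAdd 1)).toMonoidHom =
        (MulAut.conj (f₂ (Multiplicative.ofAdd 1))).toMonoidHom.comp f₁ := by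
      apply mhom_ext
      simp only [MonoidHom.comp_apply, MulEquiv.coe_toMonoidHom, MulAut.conj_apply]
      rw [ψ_one_one, zmodPowHom_natCast]
      have h1e : (1 : ZMod e) = ((1:ℕ) : ZMod e) := by norm_num
      have h1d : (1 : ZMod d) = ((1:ℕ) : ZMod d) := by norm_num
      rw [h1e, h1d, zmodPowHom_natCast, zmodPowHom_natCast, pow_one, pow_one]
      exact (tau_sigma_tau_inv).symm
    intro x
    have := DFunLike.congr_fun this x
    simpa using this
  have hpow : ∀ c : ℕ, P ((Multiplicative.ofAdd (1 : ZMod d)) ^ c) := by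
    intro c
    induction c with
    | zero => rw [pow_zero]; exact h1
    | succ m ih => rw [pow_succ]; exact hmul _ _ ih hgen
  intro gg
  have hg : gg = (Multiplicative.ofAdd (1 : ZMod d)) ^ (Multiplicative.toAdd gg).val := by
    rw [ofAdd_one_pow]
    simp [ZMod.natCast_val, ZMod.cast_id]
  refine MonoidHom.ext fun x => ?_
  simp only [MonoidHom.comp_apply, MulEquiv.coe_toMonoidHom, MulAut.conj_apply]
  rw [hg]
  exact hpow _ x

noncomputable def θb : KK hke hu →* GGrp d e k :=
  SemidirectProduct.lift (zmodPowHom e (σ d e k) sigma_pow_e)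
    (zmodPowHom d (τ d e k) tau_pow_d) (theta_comm hke hu)

noncomputable def θ : GGrp d e k ≃* KK hke hu := by
  refine MonoidHom.toMulEquiv (θf hke hu) (θb hke hu) ?_ ?_
  · apply PresentedGroup.ext
    intro x
    fin_cases x
    · show θb hke hu (θf hke hu (σ d e k)) = σ d e k
      rw [θf_σ]
      simp only [θb, SemidirectProduct.lift_inl]
      have h1e : (1 : ZMod e) = ((1:ℕ) : ZMod e) := by norm_num
      rw [h1e, zmodPowHom_natCast, pow_one]
    · show θb hke hu (θf hke hu (τ d e k)) = τ d e k
      rw [θf_τ]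
      simp only [θb, SemidirectProduct.lift_inl, SemidirectProduct.lift_inr]
      have h1d : (1 : ZMod d) = ((1:ℕ) : ZMod d) := by norm_num
      rw [h1d, zmodPowHom_natCast, pow_one]
  · apply SemidirectProduct.hom_ext
    · rw [MonoidHom.comp_assoc]
      apply mhom_ext
      simp only [MonoidHom.comp_apply, MonoidHom.id_comp]
      show θf hke hu (θb hke hu (SemidirectProduct.inl (Multiplicative.ofAdd (1:ZMod e)))) = _
      rw [θb, SemidirectProduct.lift_inl]
      have h1e : (1 : ZMod e) = ((1:ℕ) : ZMod e) := by norm_num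
      rw [h1e, zmodPowHom_natCast, pow_one, θf_σ, ← h1e]
    · rw [MonoidHom.comp_assoc]
      apply mhom_ext
      simp only [MonoidHom.comp_apply, MonoidHom.id_comp]
      show θf hke hu (θb hke hu (SemidirectProduct.inr (Multiplicative.ofAdd (1:ZMod d)))) = _
      rw [θb, SemidirectProduct.lift_inr]
      have h1d : (1 : ZMod d) = ((1:ℕ) : ZMod d) := by norm_num
      rw [h1d, zmodPowHom_natCast, pow_one, θf_τ, ← h1d]

@[simp] lemma θ_σ : θ hke hu (σ d e k) = SemidirectProduct.inl (Multiplicative.ofAdd (1:ZMod e)) :=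
  θf_σ hke hu

@[simp] lemma θ_τ : θ hke hu (τ d e k) = SemidirectProduct.inr (Multiplicative.ofAdd (1:ZMod d)) :=
  θf_τ hke hu

section chunk4
set_option linter.unusedSectionVars false
open SemidirectProduct

include hke hu

lemma inl_pow (a : ℕ) :
    (inl (Multiplicative.ofAdd (1:ZMod e)) : KK hke hu) ^ a =
      inl (Multiplicative.ofAdd ((a : ℕ) : ZMod e)) := by
  rw [← ofAdd_one_pow e a, map_pow]

lemma inr_pow (b : ℕ) :
    (inr (Multiplicative.ofAdd (1:ZMod d)) : KK hke hu) ^ b =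
      inr (Multiplicative.ofAdd ((b : ℕ) : ZMod d)) := by
  rw [← ofAdd_one_pow d b, map_pow]

lemma orderOf_σ : orderOf (σ d e k) = e := by
  rw [← (θ hke hu).orderOf_eq (σ d e k), θ_σ,
    orderOf_injective (inl : Multiplicative (ZMod e) →* KK hke hu) inl_injective,
    orderOf_ofAdd_eq_addOrderOf, ZMod.addOrderOf_one]

lemma orderOf_τ : orderOf (τ d e k) = d := by
  rw [← (θ hke hu).orderOf_eq (τ d e k), θ_τ,
    orderOf_injective (inr : Multiplicative (ZMod d) →* KK hke hu) inr_injective,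
    orderOf_ofAdd_eq_addOrderOf, ZMod.addOrderOf_one]

lemma pow_σ_eq (a b : ℕ) : (σ d e k) ^ a = σ d e k ^ b ↔ (a : ZMod e) = (b : ZMod e) := by
  rw [pow_eq_pow_iff_modEq, orderOf_σ hke hu, ZMod.natCast_eq_natCast_iff]

lemma pow_τ_eq (a b : ℕ) : (τ d e k) ^ a = τ d e k ^ b ↔ (a : ZMod d) = (b : ZMod d) := by
  rw [pow_eq_pow_iff_modEq, orderOf_τ hke hu, ZMod.natCast_eq_natCast_iff]

lemma θ_nf (a b : ℕ) : θ hke hu (σ d e k ^ a * τ d e k ^ b) =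
    inl (Multiplicative.ofAdd ((a : ZMod e))) * inr (Multiplicative.ofAdd ((b : ZMod d))) := by
  rw [map_mul, map_pow, map_pow, θ_σ, θ_τ, inl_pow, inr_pow]

lemma nf_eq_iff (a b a' b' : ℕ) :
    σ d e k ^ a * τ d e k ^ b = σ d e k ^ a' * τ d e k ^ b' ↔
      ((a : ZMod e) = (a' : ZMod e) ∧ (b : ZMod d) = (b' : ZMod d)) := by
  constructor
  · intro h
    have h2 := congrArg (θ hke hu) h
    rw [θ_nf hke hu, θ_nf hke hu] at h2
    have hl := congrArg SemidirectProduct.left h2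
    have hr := congrArg SemidirectProduct.right h2
    simp only [mul_left, mul_right, left_inl, right_inl, left_inr, right_inr, map_one, mul_one,
      one_mul] at hl hr
    exact ⟨Multiplicative.ofAdd.injective hl, Multiplicative.ofAdd.injective hr⟩
  · rintro ⟨h1, h2⟩
    rw [(pow_σ_eq hke hu a a').mpr h1, (pow_τ_eq hke hu b b').mpr h2]

lemma nf_surj (x : GGrp d e k) : ∃ a b : ℕ,
    x = σ d e k ^ a * τ d e k ^ b := by
  refine ⟨(Multiplicative.toAdd (θ hke hu x).left).val,
    (Multiplicative.toAdd (θ hke hu x).right).val, (θ hke hu).injective ?_⟩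
  rw [θ_nf hke hu]
  simp only [ZMod.natCast_val, ZMod.cast_id, ofAdd_toAdd]
  rw [inl_left_mul_inr_right]

lemma mem_sigma_of_pow_e (hcop : Nat.Coprime d e) (x : GGrp d e k) (hx : x ^ e = 1) :
    ∃ a : ℕ, x = σ d e k ^ a := by
  have hr : ((θ hke hu x).right) ^ e = 1 := by
    have h0 : (θ hke hu x) ^ e = 1 := by rw [← map_pow, hx, map_one]
    have h1 := congrArg (rightHom : KK hke hu →* Multiplicative (ZMod d)) h0
    rw [map_pow, map_one] at h1
    rw [← h1, rightHom_eq_right]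
  have ht : (e : ZMod d) * Multiplicative.toAdd ((θ hke hu x).right) = 0 := by
    have h2 := congrArg Multiplicative.toAdd hr
    simpa [toAdd_pow, nsmul_eq_mul] using h2
  have hunit : IsUnit ((e : ZMod d)) := (ZMod.unitOfCoprime e hcop.symm).isUnit
  have ht0 : Multiplicative.toAdd ((θ hke hu x).right) = 0 := hunit.mul_right_eq_zero.mp ht
  refine ⟨(Multiplicative.toAdd (θ hke hu x).left).val, (θ hke hu).injective ?_⟩
  have h3 : θ hke hu (σ d e k ^ (Multiplicative.toAdd (θ hke hu x).left).val) =
      inl (Multiplicative.ofAdd ((((Multiplicative.toAdd (θ hke hu x).left).val : ℕ) : ZMod e))) := by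
    rw [map_pow, θ_σ, inl_pow]
  rw [h3]
  simp only [ZMod.natCast_val, ZMod.cast_id, ofAdd_toAdd]
  conv_lhs => rw [← inl_left_mul_inr_right (θ hke hu x)]
  have h4 : (θ hke hu x).right = 1 := by
    have := congrArg Multiplicative.ofAdd ht0
    simpa using this
  rw [h4, map_one, mul_one]

omit hke hu

lemma tau_mul_sigma_pow (b : ℕ) : τ d e k * σ d e k ^ b = σ d e k ^ (k * b) * τ d e k := by
  have h1 : τ d e k * σ d e k ^ b * (τ d e k)⁻¹ = σ d e k ^ (k * b) := by
    calc τ d e k * σ d e k ^ b * (τ d e k)⁻¹ = MulAut.conj (τ d e k) (σ d e k ^ b) := by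
          rw [MulAut.conj_apply]
      _ = (MulAut.conj (τ d e k) (σ d e k)) ^ b := map_pow _ _ _
      _ = σ d e k ^ (k * b) := by rw [MulAut.conj_apply, tau_sigma_tau_inv, ← pow_mul]
  rw [← h1]
  group

lemma tau_pow_mul_sigma_pow (j a : ℕ) :
    τ d e k ^ j * σ d e k ^ a = σ d e k ^ (k ^ j * a) * τ d e k ^ j := by
  induction j with
  | zero => simp
  | succ m ih =>
    have hE : k * (k ^ m * a) = k ^ (m + 1) * a := by ring
    rw [pow_succ', mul_assoc, ih, ← mul_assoc, tau_mul_sigma_pow, hE, mul_assoc, ← pow_succ']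

lemma sigma_tau_pow (a j : ℕ) :
    (σ d e k ^ a * τ d e k) ^ j =
      σ d e k ^ (a * (∑ i ∈ Finset.range j, k ^ i)) * τ d e k ^ j := by
  induction j with
  | zero => simp
  | succ m ih =>
    have hE : a + k * (a * ∑ i ∈ Finset.range m, k ^ i) =
        a * (k * (∑ i ∈ Finset.range m, k ^ i) + 1) := by ring
    rw [pow_succ', ih, mul_assoc, ← mul_assoc (τ d e k), tau_mul_sigma_pow, mul_assoc,
      ← mul_assoc (σ d e k ^ a), ← pow_add, ← pow_succ', hE, geom_sum_succ]

end chunk4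

section chunk5
set_option linter.unusedSectionVars false
open SemidirectProduct

def Sd (d k : ℕ) : ℕ := ∑ i ∈ Finset.range d, k ^ i

lemma tau_conj_pow (b : ℕ) : τ d e k * σ d e k ^ b * (τ d e k)⁻¹ = σ d e k ^ (k * b) := by
  rw [tau_mul_sigma_pow]
  group

lemma conj_by_nf (a b : ℕ) :
    (σ d e k ^ a * τ d e k) * σ d e k ^ b * (σ d e k ^ a * τ d e k)⁻¹ =
      σ d e k ^ (k * b) := by
  calc (σ d e k ^ a * τ d e k) * σ d e k ^ b * (σ d e k ^ a * τ d e k)⁻¹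
      = σ d e k ^ a * (τ d e k * σ d e k ^ b * (τ d e k)⁻¹) * (σ d e k ^ a)⁻¹ := by group
    _ = σ d e k ^ a * σ d e k ^ (k * b) * (σ d e k ^ a)⁻¹ := by rw [tau_conj_pow]
    _ = σ d e k ^ (k * b) := by rw [pow_mul_comm]; group

lemma endA_rels (hke : Nat.Coprime k e) (hu : ZMod.unitOfCoprime k hke ^ d = 1) (a b : ℕ)
    (hS : ((a : ℕ) : ZMod e) * ((Sd d k : ℕ) : ZMod e) = 0) :
    ∀ r ∈ braceRels d e k,
      FreeGroup.lift ![σ d e k ^ b, σ d e k ^ a * τ d e k] r = 1 := by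
  intro r hr
  rcases hr with rfl | rfl | rfl
  · simp only [map_pow, FreeGroup.lift_apply_of, Matrix.cons_val_zero]
    rw [← pow_mul, mul_comm b e, pow_mul, sigma_pow_e, one_pow]
  · simp only [map_pow, FreeGroup.lift_apply_of, Matrix.cons_val_one, Matrix.head_cons, Matrix.cons_val_zero]
    rw [sigma_tau_pow, tau_pow_d, mul_one]
    show σ d e k ^ (a * Sd d k) = 1
    have h0 : ((a * Sd d k : ℕ) : ZMod e) = ((0 : ℕ) : ZMod e) := by push_cast [hS]; rfl
    rw [(pow_σ_eq hke hu _ 0).mpr h0, pow_zero]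
  · simp only [map_mul, map_inv, map_pow, FreeGroup.lift_apply_of, Matrix.cons_val_zero,
      Matrix.cons_val_one, Matrix.head_cons]
    rw [mul_inv_eq_one, conj_by_nf, ← pow_mul, mul_comm b k]

noncomputable def endA (hke : Nat.Coprime k e) (hu : ZMod.unitOfCoprime k hke ^ d = 1) (a b : ℕ)
    (hS : ((a : ℕ) : ZMod e) * ((Sd d k : ℕ) : ZMod e) = 0) :
    GGrp d e k →* GGrp d e k :=
  PresentedGroup.toGroup (endA_rels hke hu a b hS)

@[simp] lemma endA_σ (hke : Nat.Coprime k e) (hu : ZMod.unitOfCoprime k hke ^ d = 1) (a b : ℕ)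
    (hS) : endA hke hu a b hS (σ d e k) = σ d e k ^ b := by
  have h := PresentedGroup.toGroup.of (endA_rels hke hu a b hS) (x := 0)
  exact h

@[simp] lemma endA_τ (hke : Nat.Coprime k e) (hu : ZMod.unitOfCoprime k hke ^ d = 1) (a b : ℕ)
    (hS) : endA hke hu a b hS (τ d e k) = σ d e k ^ a * τ d e k := by
  have h := PresentedGroup.toGroup.of (endA_rels hke hu a b hS) (x := 1)
  exact h

lemma endA_comp (hke : Nat.Coprime k e) (hu : ZMod.unitOfCoprime k hke ^ d = 1) (a b a' b' : ℕ)
    (hS hS' hS'') :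
    (endA hke hu a b hS).comp (endA hke hu a' b' hS') =
      endA hke hu (a + b * a') (b * b') hS'' := by
  apply PresentedGroup.ext
  intro x
  fin_cases x
  · show endA hke hu a b hS (endA hke hu a' b' hS' (σ d e k)) = endA hke hu _ _ hS'' (σ d e k)
    rw [endA_σ, map_pow, endA_σ, endA_σ, ← pow_mul]
  · show endA hke hu a b hS (endA hke hu a' b' hS' (τ d e k)) = endA hke hu _ _ hS'' (τ d e k)
    rw [endA_τ, map_mul, map_pow, endA_σ, endA_τ, endA_τ, ← pow_mul, ← mul_assoc, ← pow_add,
      add_comm (b * a') a]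

lemma endA_congr (hke : Nat.Coprime k e) (hu : ZMod.unitOfCoprime k hke ^ d = 1) (a b a' b' : ℕ)
    (hS hS') (haa' : ((a:ℕ) : ZMod e) = ((a':ℕ) : ZMod e))
    (hbb' : ((b:ℕ) : ZMod e) = ((b':ℕ) : ZMod e)) :
    endA hke hu a b hS = endA hke hu a' b' hS' := by
  apply PresentedGroup.ext
  intro x
  fin_cases x
  · show endA hke hu a b hS (σ d e k) = endA hke hu a' b' hS' (σ d e k)
    rw [endA_σ, endA_σ, (pow_σ_eq hke hu b b').mpr hbb']
  · show endA hke hu a b hS (τ d e k) = endA hke hu a' b' hS' (τ d e k)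
    rw [endA_τ, endA_τ, (pow_σ_eq hke hu a a').mpr haa']

lemma endA_id (hke : Nat.Coprime k e) (hu : ZMod.unitOfCoprime k hke ^ d = 1) (hS0) :
    endA hke hu 0 1 hS0 = MonoidHom.id (GGrp d e k) := by
  apply PresentedGroup.ext
  intro x
  fin_cases x
  · show endA hke hu 0 1 hS0 (σ d e k) = σ d e k
    rw [endA_σ, pow_one]
  · show endA hke hu 0 1 hS0 (τ d e k) = τ d e k
    rw [endA_τ, pow_zero, one_mul]

variable (z g : ℕ) (hzg : z * g = e) [NeZero e] [NeZero g]

noncomputable def ι : ZMod g →+ ZMod e :=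
  ZMod.lift g ⟨zmultiplesHom (ZMod e) ((z : ℕ) : ZMod e), by
    show (g : ℤ) • ((z : ℕ) : ZMod e) = 0
    have h1 : (g : ℤ) • ((z : ℕ) : ZMod e) = ((z * g : ℕ) : ZMod e) := by
      rw [zsmul_eq_mul]; push_cast; ring
    rw [h1, hzg, ZMod.natCast_self]⟩

lemma ι_natCast (c : ℕ) : ι z g hzg ((c : ℕ) : ZMod g) = ((z * c : ℕ) : ZMod e) := by
  have h1 : (((c : ℤ)) : ZMod g) = ((c : ℕ) : ZMod g) := by push_cast; rfl
  rw [← h1, ι, ZMod.lift_coe]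
  show (c : ℤ) • ((z : ℕ) : ZMod e) = _
  rw [zsmul_eq_mul]; push_cast; ring

lemma ι_inj : Function.Injective (ι z g hzg) := by
  have hz0 : z ≠ 0 := by
    rintro rfl
    exact (NeZero.ne e) (by rw [← hzg, zero_mul])
  rw [injective_iff_map_eq_zero]
  intro m hm
  have h1 : m = ((m.val : ℕ) : ZMod g) := by simp [ZMod.natCast_val, ZMod.cast_id]
  rw [h1, ι_natCast] at hm
  have h2 : e ∣ z * m.val := (ZMod.natCast_eq_zero_iff _ _).mp hm
  rw [← hzg] at h2
  have h3 : g ∣ m.val := (mul_dvd_mul_iff_left hz0).mp h2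
  have h4 : m.val = 0 := Nat.eq_zero_of_dvd_of_lt h3 (ZMod.val_lt m)
  rw [h1, h4, Nat.cast_zero]

lemma ι_scalar (hge : g ∣ e) (s : ZMod e) (m : ZMod g) :
    ι z g hzg (ZMod.castHom hge (ZMod g) s * m) = s * ι z g hzg m := by
  have hc : ZMod.castHom hge (ZMod g) s = ((s.val : ℕ) : ZMod g) := by
    rw [ZMod.castHom_apply, ZMod.natCast_val]
  have hs : ((s.val : ℕ) : ZMod e) = s := by simp [ZMod.natCast_val, ZMod.cast_id]
  have hom_eq : (ι z g hzg).comp (AddMonoidHom.mulLeft ((s.val : ℕ) : ZMod g)) =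
      (AddMonoidHom.mulLeft ((s.val : ℕ) : ZMod e)).comp (ι z g hzg) := by
    apply ahom_ext
    simp only [AddMonoidHom.comp_apply, AddMonoidHom.coe_mulLeft, mul_one]
    rw [ι_natCast, show (1 : ZMod g) = ((1:ℕ) : ZMod g) by norm_num, ι_natCast, mul_one]
    push_cast
    ring
  have := DFunLike.congr_fun hom_eq m
  simp only [AddMonoidHom.comp_apply, AddMonoidHom.coe_mulLeft] at this
  rw [hc, this, hs]

lemma ann_sol (hSz : ∀ x : ℕ, e ∣ x * Sd d k → z ∣ x) (x : ZMod e)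
    (hx : x * ((Sd d k : ℕ) : ZMod e) = 0) : ∃ m : ZMod g, x = ι z g hzg m := by
  have h1 : x = ((x.val : ℕ) : ZMod e) := by simp [ZMod.natCast_val, ZMod.cast_id]
  have h2 : ((x.val * Sd d k : ℕ) : ZMod e) = 0 := by push_cast; rw [← h1, hx]
  have h3 : e ∣ x.val * Sd d k := (ZMod.natCast_eq_zero_iff _ _).mp h2
  obtain ⟨y, hy⟩ := hSz x.val h3
  exact ⟨((y : ℕ) : ZMod g), by rw [ι_natCast, ← hy, ← h1]⟩

end chunk5

section chunk6
set_option linter.unusedSectionVars false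
open SemidirectProduct

variable (z g : ℕ) [NeZero g]

noncomputable def φg (hge : g ∣ e) : (ZMod e)ˣ →* MulAut (Multiplicative (ZMod g)) :=
  (unitsMulAut g).comp (Units.map (ZMod.castHom hge (ZMod g)).toMonoidHom)

lemma φg_apply (hge : g ∣ e) (s : (ZMod e)ˣ) (m : ZMod g) :
    φg g hge s (Multiplicative.ofAdd m) =
      Multiplicative.ofAdd ((ZMod.castHom hge (ZMod g) ((s : ZMod e))) * m) := by
  rw [φg, MonoidHom.comp_apply, unitsMulAut_apply]
  norm_num

variable (hzg : z * g = e) (hge : g ∣ e) (hzS0 : ((z * Sd d k : ℕ) : ZMod e) = 0)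

include hzg hzS0 in
lemma hcond (m : ZMod g) :
    ((((ι z g hzg m).val : ℕ)) : ZMod e) * ((Sd d k : ℕ) : ZMod e) = 0 := by
  have h1 : (((ι z g hzg m).val : ℕ) : ZMod e) = ι z g hzg m := by
    simp [ZMod.natCast_val, ZMod.cast_id]
  have h2 : m = ((m.val : ℕ) : ZMod g) := by simp [ZMod.natCast_val, ZMod.cast_id]
  rw [h1, h2, ι_natCast]
  calc ((z * m.val : ℕ) : ZMod e) * ((Sd d k : ℕ) : ZMod e)
      = ((m.val : ℕ) : ZMod e) * ((z * Sd d k : ℕ) : ZMod e) := by push_cast; ring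
    _ = 0 := by rw [hzS0, mul_zero]

noncomputable def Φ0fun (x : Multiplicative (ZMod g) ⋊[φg g hge] (ZMod e)ˣ) :
    Monoid.End (GGrp d e k) :=
  endA hke hu (ι z g hzg (Multiplicative.toAdd x.left)).val
    ((x.right : ZMod e)).val (hcond z g hzg hzS0 _)

lemma Φ0fun_one : Φ0fun hke hu z g hzg hge hzS0 1 = 1 := by
  rw [Φ0fun]
  have h1 : ((((ι z g hzg (Multiplicative.toAdd
      (1 : Multiplicative (ZMod g) ⋊[φg g hge] (ZMod e)ˣ).left)).val : ℕ)) : ZMod e)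
      = ((0 : ℕ) : ZMod e) := by
    simp [ZMod.natCast_val, ZMod.cast_id]
  have h2 : ((((((1 : Multiplicative (ZMod g) ⋊[φg g hge] (ZMod e)ˣ).right :
      (ZMod e)ˣ) : ZMod e)).val : ℕ) : ZMod e) = ((1 : ℕ) : ZMod e) := by
    simp [ZMod.natCast_val, ZMod.cast_id]
  rw [endA_congr hke hu _ _ 0 1 _ (by simp) h1 h2, endA_id]
  rfl

lemma Φ0fun_mul (x y : Multiplicative (ZMod g) ⋊[φg g hge] (ZMod e)ˣ) :
    Φ0fun hke hu z g hzg hge hzS0 (x * y) =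
      Φ0fun hke hu z g hzg hge hzS0 x * Φ0fun hke hu z g hzg hge hzS0 y := by
  have hmulE : Φ0fun hke hu z g hzg hge hzS0 x * Φ0fun hke hu z g hzg hge hzS0 y =
      (Φ0fun hke hu z g hzg hge hzS0 x).comp (Φ0fun hke hu z g hzg hge hzS0 y) := rfl
  have hS'' : ((((ι z g hzg (Multiplicative.toAdd x.left)).val +
      ((x.right : ZMod e)).val * (ι z g hzg (Multiplicative.toAdd y.left)).val : ℕ)) : ZMod e)
      * ((Sd d k : ℕ) : ZMod e) = 0 := by
    have h3 := hcond z g hzg hzS0 (Multiplicative.toAdd x.left +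
      ZMod.castHom hge (ZMod g) ((x.right : ZMod e)) * Multiplicative.toAdd y.left)
    calc ((((ι z g hzg (Multiplicative.toAdd x.left)).val +
          ((x.right : ZMod e)).val * (ι z g hzg (Multiplicative.toAdd y.left)).val : ℕ)) : ZMod e)
          * ((Sd d k : ℕ) : ZMod e)
        = ((((ι z g hzg (Multiplicative.toAdd x.left +
            ZMod.castHom hge (ZMod g) ((x.right : ZMod e)) * Multiplicative.toAdd y.left)).val : ℕ)) : ZMod e)
          * ((Sd d k : ℕ) : ZMod e) := by
          rw [map_add, ι_scalar z g hzg hge]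
          push_cast [ZMod.natCast_val, ZMod.cast_id]
          ring
      _ = 0 := h3
  rw [hmulE, Φ0fun, Φ0fun, Φ0fun,
    endA_comp hke hu _ _ _ _ _ _ hS'']
  apply endA_congr
  · -- a-exponent congruence
    rw [mul_left]
    have hmul : Multiplicative.toAdd (x.left * (φg g hge) x.right y.left) =
        Multiplicative.toAdd x.left +
          ZMod.castHom hge (ZMod g) ((x.right : ZMod e)) * Multiplicative.toAdd y.left := by
      conv_lhs => rw [← ofAdd_toAdd y.left]
      rw [φg_apply]
      rfl
    rw [hmul, map_add, ι_scalar z g hzg hge]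
    push_cast [ZMod.natCast_val, ZMod.cast_id]
    ring
  · -- b-exponent congruence
    rw [mul_right]
    push_cast [ZMod.natCast_val, ZMod.cast_id, Units.val_mul]
    ring

noncomputable def Φ0 : (Multiplicative (ZMod g) ⋊[φg g hge] (ZMod e)ˣ) →* Monoid.End (GGrp d e k) where
  toFun := Φ0fun hke hu z g hzg hge hzS0
  map_one' := Φ0fun_one hke hu z g hzg hge hzS0
  map_mul' := Φ0fun_mul hke hu z g hzg hge hzS0

end chunk6

section chunk7
set_option linter.unusedSectionVars false
open SemidirectProduct

variable (z g : ℕ) [NeZero g]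
variable (hzg : z * g = e) (hge : g ∣ e) (hzS0 : ((z * Sd d k : ℕ) : ZMod e) = 0)

noncomputable def Φ : (Multiplicative (ZMod g) ⋊[φg g hge] (ZMod e)ˣ) →* MulAut (GGrp d e k) where
  toFun x :=
    { toFun := Φ0 hke hu z g hzg hge hzS0 x
      invFun := Φ0 hke hu z g hzg hge hzS0 x⁻¹
      left_inv := fun a => by
        have h : Φ0 hke hu z g hzg hge hzS0 x⁻¹ * Φ0 hke hu z g hzg hge hzS0 x = 1 := by
          rw [← map_mul, inv_mul_cancel, map_one]
        exact DFunLike.congr_fun h a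
      right_inv := fun a => by
        have h : Φ0 hke hu z g hzg hge hzS0 x * Φ0 hke hu z g hzg hge hzS0 x⁻¹ = 1 := by
          rw [← map_mul, mul_inv_cancel, map_one]
        exact DFunLike.congr_fun h a
      map_mul' := map_mul (Φ0 hke hu z g hzg hge hzS0 x) }
  map_one' := by
    refine MulEquiv.ext fun a => ?_
    show Φ0 hke hu z g hzg hge hzS0 1 a = a
    rw [map_one]
    rfl
  map_mul' x y := by
    refine MulEquiv.ext fun a => ?_
    show Φ0 hke hu z g hzg hge hzS0 (x * y) a =
      Φ0 hke hu z g hzg hge hzS0 x (Φ0 hke hu z g hzg hge hzS0 y a)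
    rw [map_mul]
    rfl

lemma Φ_apply (x : Multiplicative (ZMod g) ⋊[φg g hge] (ZMod e)ˣ) (a : GGrp d e k) :
    Φ hke hu z g hzg hge hzS0 x a = Φ0 hke hu z g hzg hge hzS0 x a := rfl

lemma Φ0_apply_σ (x : Multiplicative (ZMod g) ⋊[φg g hge] (ZMod e)ˣ) :
    Φ0 hke hu z g hzg hge hzS0 x (σ d e k) =
      σ d e k ^ (((x.right : ZMod e)).val) := by
  have h : Φ0 hke hu z g hzg hge hzS0 x = Φ0fun hke hu z g hzg hge hzS0 x := rfl
  rw [h, Φ0fun]; exact endA_σ hke hu _ _ _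

lemma Φ0_apply_τ (x : Multiplicative (ZMod g) ⋊[φg g hge] (ZMod e)ˣ) :
    Φ0 hke hu z g hzg hge hzS0 x (τ d e k) =
      σ d e k ^ ((ι z g hzg (Multiplicative.toAdd x.left)).val) * τ d e k := by
  have h : Φ0 hke hu z g hzg hge hzS0 x = Φ0fun hke hu z g hzg hge hzS0 x := rfl
  rw [h, Φ0fun]; exact endA_τ hke hu _ _ _

lemma Φ_inj : Function.Injective (Φ hke hu z g hzg hge hzS0) := by
  rw [injective_iff_map_eq_one]
  intro x hx
  have hσ : Φ0 hke hu z g hzg hge hzS0 x (σ d e k) = σ d e k := DFunLike.congr_fun hx (σ d e k)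
  have hτ : Φ0 hke hu z g hzg hge hzS0 x (τ d e k) = τ d e k := DFunLike.congr_fun hx (τ d e k)
  rw [Φ0_apply_σ] at hσ
  rw [Φ0_apply_τ] at hτ
  have hr : x.right = 1 := by
    have h1 : σ d e k ^ (((x.right : ZMod e)).val) = σ d e k ^ 1 := by rw [pow_one]; exact hσ
    have h2 := (pow_σ_eq hke hu _ 1).mp h1
    apply Units.ext
    rw [show ((x.right : (ZMod e)ˣ) : ZMod e) = ((((x.right : ZMod e)).val : ℕ) : ZMod e) by
      simp [ZMod.natCast_val, ZMod.cast_id]]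
    rw [h2]
    norm_num
  have hl : x.left = 1 := by
    have h1 : σ d e k ^ ((ι z g hzg (Multiplicative.toAdd x.left)).val) * τ d e k
        = σ d e k ^ 0 * τ d e k := by rw [pow_zero, one_mul]; exact hτ
    have h2 := mul_right_cancel h1
    have h3 := (pow_σ_eq hke hu _ 0).mp h2
    have h4 : ι z g hzg (Multiplicative.toAdd x.left) = 0 := by
      rw [show ι z g hzg (Multiplicative.toAdd x.left) =
        (((ι z g hzg (Multiplicative.toAdd x.left)).val : ℕ) : ZMod e) by
          simp [ZMod.natCast_val, ZMod.cast_id]]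
      rw [h3]
      norm_num
    have h5 : Multiplicative.toAdd x.left = 0 := by
      apply ι_inj z g hzg
      rw [h4, map_zero]
    have h6 := congrArg Multiplicative.ofAdd h5
    rwa [ofAdd_toAdd] at h6
  cases x with
  | mk l r => 
    simp only at hl hr
    rw [hl, hr]
    rfl

lemma Φ_surj (hord : orderOf (ZMod.unitOfCoprime k hke) = d) (hcop : Nat.Coprime d e)
    (hSz : ∀ x : ℕ, e ∣ x * Sd d k → z ∣ x) :
    Function.Surjective (Φ hke hu z g hzg hge hzS0) := by
  intro f
  obtain ⟨a₀, hfσ⟩ := mem_sigma_of_pow_e hke hu hcop (f (σ d e k))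
    (by rw [← map_pow, sigma_pow_e, map_one])
  obtain ⟨c₀, hc⟩ := mem_sigma_of_pow_e hke hu hcop (f.symm (σ d e k))
    (by rw [← map_pow, sigma_pow_e, map_one])
  have hσ1 : σ d e k ^ (a₀ * c₀) = σ d e k ^ 1 := by
    have h4 : f (f.symm (σ d e k)) = σ d e k := f.apply_symm_apply (σ d e k)
    rw [hc, map_pow, hfσ, ← pow_mul] at h4
    rw [h4, pow_one]
  have hunit : IsUnit ((a₀ : ℕ) : ZMod e) := by
    refine IsUnit.of_mul_eq_one ((c₀ : ℕ) : ZMod e) ?_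
    have h5 := (pow_σ_eq hke hu (a₀ * c₀) 1).mp hσ1
    push_cast at h5
    exact h5
  obtain ⟨a₁, b₁, hfτ⟩ := nf_surj hke hu (f (τ d e k))
  have hrel : f (τ d e k) * f (σ d e k) * (f (τ d e k))⁻¹ = (f (σ d e k)) ^ k := by
    rw [← map_mul, ← map_inv, ← map_mul, ← map_pow, tau_sigma_tau_inv]
  have hconj : (σ d e k ^ a₁ * τ d e k ^ b₁) * σ d e k ^ a₀ * (σ d e k ^ a₁ * τ d e k ^ b₁)⁻¹ =
      σ d e k ^ (k ^ b₁ * a₀) := by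
    have hstep : τ d e k ^ b₁ * σ d e k ^ a₀ * (τ d e k ^ b₁)⁻¹ = σ d e k ^ (k ^ b₁ * a₀) := by
      rw [tau_pow_mul_sigma_pow]
      group
    calc (σ d e k ^ a₁ * τ d e k ^ b₁) * σ d e k ^ a₀ * (σ d e k ^ a₁ * τ d e k ^ b₁)⁻¹
        = σ d e k ^ a₁ * (τ d e k ^ b₁ * σ d e k ^ a₀ * (τ d e k ^ b₁)⁻¹) * (σ d e k ^ a₁)⁻¹ := by
          group
      _ = σ d e k ^ a₁ * σ d e k ^ (k ^ b₁ * a₀) * (σ d e k ^ a₁)⁻¹ := by rw [hstep]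
      _ = σ d e k ^ (k ^ b₁ * a₀) := by rw [pow_mul_comm]; group
  rw [hfσ, hfτ, hconj, ← pow_mul] at hrel
  have hcast := (pow_σ_eq hke hu _ _).mp hrel
  have hkk : ((k : ℕ) : ZMod e) ^ b₁ = ((k : ℕ) : ZMod e) := by
    push_cast at hcast
    have h5 : ((k : ℕ) : ZMod e) ^ b₁ * ((a₀ : ℕ) : ZMod e) =
        ((k : ℕ) : ZMod e) * ((a₀ : ℕ) : ZMod e) := by
      rw [hcast]
      ring
    exact hunit.mul_right_cancel h5
  have hub : (ZMod.unitOfCoprime k hke) ^ b₁ = (ZMod.unitOfCoprime k hke) ^ 1 := by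
    apply Units.ext
    push_cast [ZMod.coe_unitOfCoprime]
    rw [pow_one, hkk]
  have hb1 : ((b₁ : ℕ) : ZMod d) = ((1 : ℕ) : ZMod d) := by
    have h5 := pow_eq_pow_iff_modEq.mp hub
    rw [hord] at h5
    exact (ZMod.natCast_eq_natCast_iff _ _ _).mpr h5
  have hfτ1 : f (τ d e k) = σ d e k ^ a₁ * τ d e k ^ 1 := by
    rw [hfτ]
    exact (nf_eq_iff hke hu a₁ b₁ a₁ 1).mpr ⟨rfl, hb1⟩
  have h6 : (σ d e k ^ a₁ * τ d e k) ^ d = 1 := by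
    have h6' : (f (τ d e k)) ^ d = 1 := by rw [← map_pow, tau_pow_d, map_one]
    rwa [hfτ1, pow_one] at h6'
  have hS1 : ((a₁ * Sd d k : ℕ) : ZMod e) = ((0 : ℕ) : ZMod e) := by
    rw [sigma_tau_pow, tau_pow_d, mul_one] at h6
    refine (pow_σ_eq hke hu (a₁ * Sd d k) 0).mp ?_
    rw [pow_zero]
    exact h6
  have hS2 : ((a₁ : ℕ) : ZMod e) * ((Sd d k : ℕ) : ZMod e) = 0 := by
    push_cast at hS1
    exact hS1
  obtain ⟨m, hm⟩ := ann_sol z g hzg hSz ((a₁ : ℕ) : ZMod e) hS2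
  refine ⟨⟨Multiplicative.ofAdd m, hunit.unit⟩, ?_⟩
  have hhom : (Φ0 hke hu z g hzg hge hzS0 ⟨Multiplicative.ofAdd m, hunit.unit⟩) =
      (f : GGrp d e k →* GGrp d e k) := by
    apply PresentedGroup.ext
    intro i
    fin_cases i
    · show Φ0 hke hu z g hzg hge hzS0 ⟨Multiplicative.ofAdd m, hunit.unit⟩ (σ d e k) =
        f (σ d e k)
      rw [Φ0_apply_σ, hfσ]
      apply (pow_σ_eq hke hu _ _).mpr
      have hv : ((((hunit.unit : (ZMod e)ˣ) : ZMod e)).val : ZMod e)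
          = ((hunit.unit : (ZMod e)ˣ) : ZMod e) := by simp [ZMod.natCast_val, ZMod.cast_id]
      show ((((hunit.unit : (ZMod e)ˣ) : ZMod e)).val : ZMod e) = ((a₀ : ℕ) : ZMod e)
      rw [hv, IsUnit.unit_spec]
    · show Φ0 hke hu z g hzg hge hzS0 ⟨Multiplicative.ofAdd m, hunit.unit⟩ (τ d e k) =
        f (τ d e k)
      rw [Φ0_apply_τ, hfτ1, pow_one]
      have hv : (((ι z g hzg (Multiplicative.toAdd (Multiplicative.ofAdd m))).val : ℕ) : ZMod e)
          = ((a₁ : ℕ) : ZMod e) := by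
        rw [toAdd_ofAdd]
        rw [show (((ι z g hzg m).val : ℕ) : ZMod e) = ι z g hzg m by
          simp [ZMod.natCast_val, ZMod.cast_id]]
        exact hm.symm
      rw [(pow_σ_eq hke hu _ a₁).mpr hv]
  exact MulEquiv.ext fun y => DFunLike.congr_fun hhom y

end chunk7

section chunk8
set_option linter.unusedSectionVars false
open SemidirectProduct Finset

lemma dvd_pow_sub_one [NeZero e] (hke : Nat.Coprime k e)
    (hu : ZMod.unitOfCoprime k hke ^ d = 1) : e ∣ k ^ d - 1 := by
  by_cases hk : k = 0
  · have he1 : e = 1 := by simpa [hk, Nat.coprime_zero_left] using hke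
    simp [he1]
  · have hk1 : 1 ≤ k := Nat.one_le_iff_ne_zero.mpr hk
    have h1 : ((ZMod.unitOfCoprime k hke : ZMod e)) ^ d = 1 := by
      rw [← Units.val_pow_eq_pow_val, hu, Units.val_one]
    rw [ZMod.coe_unitOfCoprime] at h1
    have hcast : ((k ^ d : ℕ) : ZMod e) = ((1 : ℕ) : ZMod e) := by push_cast [h1]; rfl
    have hmod := (ZMod.natCast_eq_natCast_iff _ _ _).mp hcast
    exact (Nat.modEq_iff_dvd' (Nat.one_le_pow _ _ hk1)).mp hmod.symm

lemma geom_eq [NeZero d] : (k - 1) * Sd d k = k ^ d - 1 := by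
  by_cases hk : k = 0
  · simp [hk, zero_pow (NeZero.ne d)]
  · have hk1 : 1 ≤ k := Nat.one_le_iff_ne_zero.mpr hk
    have hkd1 : 1 ≤ k ^ d := Nat.one_le_pow _ _ hk1
    have hZ : ((k : ℤ) - 1) * (∑ i ∈ range d, (k : ℤ) ^ i) = (k : ℤ) ^ d - 1 := by
      rw [mul_comm]; exact geom_sum_mul (k : ℤ) d
    have h2 : (((k - 1) * Sd d k : ℕ) : ℤ) = ((k ^ d - 1 : ℕ) : ℤ) := by
      push_cast [Nat.cast_sub hk1, Nat.cast_sub hkd1, Sd]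
      exact hZ
    exact Nat.cast_injective h2

lemma g_dvd_S (z g : ℕ) [NeZero d] [NeZero e] (hke : Nat.Coprime k e)
    (hu : ZMod.unitOfCoprime k hke ^ d = 1) (hz : z = Nat.gcd (k - 1) e) (hzg : z * g = e) :
    g ∣ Sd d k := by
  have hz0 : z ≠ 0 := by
    rintro rfl
    exact (NeZero.ne e) (by rw [← hzg, zero_mul])
  have hzk1 : z ∣ k - 1 := hz ▸ Nat.gcd_dvd_left _ _
  obtain ⟨t, ht⟩ := hzk1
  have ht' : t = (k - 1) / z := by rw [ht, Nat.mul_div_cancel_left _ (Nat.pos_of_ne_zero hz0)]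
  have hg' : g = e / z := by rw [← hzg, Nat.mul_div_cancel_left _ (Nat.pos_of_ne_zero hz0)]
  have hed : e ∣ (k - 1) * Sd d k := by
    rw [geom_eq]; exact dvd_pow_sub_one hke hu
  have h2 : z * g ∣ z * (t * Sd d k) := by
    rw [hzg, ← mul_assoc, ← ht]; exact hed
  have h3 : g ∣ t * Sd d k := (mul_dvd_mul_iff_left hz0).mp h2
  have hco : Nat.Coprime t g := by
    rw [ht', hg', hz]
    exact Nat.coprime_div_gcd_div_gcd (hz ▸ Nat.pos_of_ne_zero hz0)
  exact (Nat.Coprime.dvd_of_dvd_mul_left hco.symm h3)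

lemma coprime_S_z (z : ℕ) [NeZero d] [NeZero e] (hke : Nat.Coprime k e)
    (hcop : Nat.Coprime d e) (hz : z = Nat.gcd (k - 1) e) : Nat.Coprime (Sd d k) z := by
  by_contra h
  have hne : Nat.gcd (Sd d k) z ≠ 1 := h
  set p := (Nat.gcd (Sd d k) z).minFac with hp_def
  have hp : p.Prime := Nat.minFac_prime hne
  have hpS : p ∣ Sd d k := (Nat.minFac_dvd _).trans (Nat.gcd_dvd_left _ _)
  have hpz : p ∣ z := (Nat.minFac_dvd _).trans (Nat.gcd_dvd_right _ _)
  have hpk1 : p ∣ k - 1 := hpz.trans (hz ▸ Nat.gcd_dvd_left _ _)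
  have hpe : p ∣ e := hpz.trans (hz ▸ Nat.gcd_dvd_right _ _)
  by_cases hk : k = 0
  · have he1 : e = 1 := by simpa [hk, Nat.coprime_zero_left] using hke
    exact hp.ne_one (Nat.eq_one_of_dvd_one (he1 ▸ hpe))
  · have hk1 : 1 ≤ k := Nat.one_le_iff_ne_zero.mpr hk
    haveI : Fact p.Prime := ⟨hp⟩
    have hk1p : ((k : ℕ) : ZMod p) = ((1 : ℕ) : ZMod p) :=
      (ZMod.natCast_eq_natCast_iff _ _ _).mpr ((Nat.modEq_iff_dvd' hk1).mpr hpk1).symm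
    have hSp : ((Sd d k : ℕ) : ZMod p) = ((d : ℕ) : ZMod p) := by
      calc ((Sd d k : ℕ) : ZMod p) = ∑ i ∈ range d, ((k : ℕ) : ZMod p) ^ i := by
            push_cast [Sd]; rfl
        _ = ∑ i ∈ range d, 1 := by rw [hk1p]; push_cast; simp
        _ = ((d : ℕ) : ZMod p) := by simp
    have hS0 : ((Sd d k : ℕ) : ZMod p) = 0 := (ZMod.natCast_eq_zero_iff _ _).mpr hpS
    have hpd : p ∣ d := (ZMod.natCast_eq_zero_iff _ _).mp (by rw [← hSp, hS0])
    have hgcd : p ∣ Nat.gcd d e := Nat.dvd_gcd hpd hpe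
    rw [hcop] at hgcd
    exact hp.ne_one (Nat.eq_one_of_dvd_one hgcd)

end chunk8

section chunk9
set_option linter.unusedSectionVars false
open SemidirectProduct

def sdpEquivProd {N G : Type*} [Group N] [Group G] (φ : G →* MulAut N) :
    (N ⋊[φ] G) ≃ N × G where
  toFun x := (x.left, x.right)
  invFun p := ⟨p.1, p.2⟩
  left_inv x := by cases x; rfl
  right_inv p := rfl

lemma master (z g : ℕ) [NeZero d] [NeZero e] [NeZero g] (hke : Nat.Coprime k e)
    (hord : orderOf (ZMod.unitOfCoprime k hke) = d) (hcop : Nat.Coprime d e)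
    (hz : z = Nat.gcd (k - 1) e) (hg : g = e / z) :
    (∃ φ : (ZMod e)ˣ →* MulAut (Multiplicative (ZMod g)),
      Nonempty (MulAut (GGrp d e k) ≃* (Multiplicative (ZMod g)) ⋊[φ] (ZMod e)ˣ)) ∧
    Nat.card (MulAut (GGrp d e k)) = g * Nat.totient e := by
  have hu : ZMod.unitOfCoprime k hke ^ d = 1 := by rw [← hord]; exact pow_orderOf_eq_one _
  have hzdvd : z ∣ e := hz ▸ Nat.gcd_dvd_right _ _
  have hzg : z * g = e := by rw [hg]; exact Nat.mul_div_cancel' hzdvd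
  have hge : g ∣ e := ⟨z, by rw [← hzg]; ring⟩
  obtain ⟨S₁, hS₁⟩ := g_dvd_S z g hke hu hz hzg
  have hg0 : g ≠ 0 := NeZero.ne g
  have hzS0 : ((z * Sd d k : ℕ) : ZMod e) = 0 := by
    apply (ZMod.natCast_eq_zero_iff _ _).mpr
    exact ⟨S₁, by rw [← hzg, hS₁]; ring⟩
  have hSz : ∀ x : ℕ, e ∣ x * Sd d k → z ∣ x := by
    intro x hx
    rw [hS₁] at hx
    have hx' : e ∣ g * (x * S₁) := by
      have hr : x * (g * S₁) = g * (x * S₁) := by ring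
      rwa [hr] at hx
    have h1 : g * z ∣ g * (x * S₁) := by rwa [mul_comm g z, hzg]
    have h2 : z ∣ x * S₁ := (mul_dvd_mul_iff_left hg0).mp h1
    have hS₁dvd : S₁ ∣ Sd d k := ⟨g, by rw [hS₁]; ring⟩
    have hco : Nat.Coprime z S₁ :=
      (Nat.Coprime.coprime_dvd_left hS₁dvd (coprime_S_z z hke hcop hz)).symm
    exact hco.dvd_of_dvd_mul_right h2
  have E := MulEquiv.ofBijective (Φ hke hu z g hzg hge hzS0)
    ⟨Φ_inj hke hu z g hzg hge hzS0, Φ_surj hke hu z g hzg hge hzS0 hord hcop hSz⟩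
  refine ⟨⟨φg g hge, ⟨E.symm⟩⟩, ?_⟩
  have hcard : Nat.card (MulAut (GGrp d e k)) =
      Nat.card (Multiplicative (ZMod g) ⋊[φg g hge] (ZMod e)ˣ) := (Nat.card_congr E.toEquiv).symm
  rw [hcard, Nat.card_congr (sdpEquivProd _), Nat.card_prod,
    Nat.card_congr Multiplicative.toAdd, Nat.card_zmod, Nat.card_eq_fintype_card,
    ZMod.card_units_eq_totient]

end chunk9
end AutGG

/-- For `A = G(d,e,k)` of squarefree order `n = de`, with `z = gcd(k-1,e)` and `g = e/z`,
the automorphism group of `A` is isomorphic to a semidirect product `ℤ/gℤ ⋊ (ℤ/eℤ)ˣ`;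
in particular `|Aut(A)| = g·φ(e)`. -/
theorem aut_GGrp (n d e k z g : ℕ) (hn : Squarefree n) (hde : n = d * e)
    (hcop : Nat.Coprime d e) (hke : Nat.Coprime k e)
    (hord : orderOf (ZMod.unitOfCoprime k hke) = d)
    (hz : z = Nat.gcd (k - 1) e) (hg : g = e / z) :
    (∃ φ : (ZMod e)ˣ →* MulAut (Multiplicative (ZMod g)),
      Nonempty (MulAut (GGrp d e k) ≃* (Multiplicative (ZMod g)) ⋊[φ] (ZMod e)ˣ)) ∧
    Nat.card (MulAut (GGrp d e k)) = g * Nat.totient e := by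
  have hn0 : n ≠ 0 := hn.ne_zero
  have he0 : e ≠ 0 := fun h => hn0 (by rw [hde, h, mul_zero])
  have hd0 : d ≠ 0 := fun h => hn0 (by rw [hde, h, zero_mul])
  haveI : NeZero d := ⟨hd0⟩
  haveI : NeZero e := ⟨he0⟩
  have hzdvd : z ∣ e := hz ▸ Nat.gcd_dvd_right _ _
  have hzg : z * g = e := by rw [hg]; exact Nat.mul_div_cancel' hzdvd
  have hg0 : g ≠ 0 := fun h => he0 (by rw [← hzg, h, mul_zero])
  haveI : NeZero g := ⟨hg0⟩
  exact AutGG.master z g hke hord hcop hz hg
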